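/- arXiv:1211.2948 — 2 statements merged into one kernel-verified Lean document; each statement's English description precedes it below -/
import Mathlib

section
/- Let Δ ⊂ ℂ be the unit disc, E = Δ × ℂ² the trivial rank-2 bundle, and let h be the singular hermitian metric given by the matrix with rows (1+|z|², z) and (z̄, |z|²). Then for every holomorphic section u = (u₁, u₂) of E one has ‖u‖²_h = |z u₁(z)|² + |u₁(z) + z u₂(z)|²; consequently ‖u‖²_h is subharmonic for every holomorphic section u, i.e. h is negatively curved in the sense of Griffiths. -/
open MeasureTheory Complex Metric intervalIntegral
open scoped ComplexOrder

noncomputable section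

/-- The Wirtinger derivative `∂f/∂z` of a function on `ℂ`. -/
def wD1 (f : ℂ → ℂ) (z : ℂ) : ℂ :=
  (1/2) * (fderiv ℝ f z 1 - Complex.I * fderiv ℝ f z Complex.I)

/-- The Wirtinger derivative `∂f/∂z̄` of a function on `ℂ`. -/
def wDbar1 (f : ℂ → ℂ) (z : ℂ) : ℂ :=
  (1/2) * (fderiv ℝ f z 1 + Complex.I * fderiv ℝ f z Complex.I)

/-- Entrywise Wirtinger derivative `∂h/∂z` of a matrix-valued function on `ℂ`. -/
def mwD1 {r : ℕ} (h : ℂ → Matrix (Fin r) (Fin r) ℂ) (z : ℂ) : Matrix (Fin r) (Fin r) ℂ :=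
  Matrix.of fun a b => wD1 (fun w => h w a b) z

/-- Entrywise Wirtinger derivative `∂h/∂z̄` of a matrix-valued function on `ℂ`. -/
def mwDbar1 {r : ℕ} (h : ℂ → Matrix (Fin r) (Fin r) ℂ) (z : ℂ) : Matrix (Fin r) (Fin r) ℂ :=
  Matrix.of fun a b => wDbar1 (fun w => h w a b) z

/-- The Chern connection matrix `θ = h⁻¹ ∂h` (coefficient of `dz`). -/
def conn1 {r : ℕ} (h : ℂ → Matrix (Fin r) (Fin r) ℂ) (z : ℂ) : Matrix (Fin r) (Fin r) ℂ :=
  (h z)⁻¹ * mwD1 h z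

/-- The Chern curvature coefficient: `Θ^h = ∂̄θ^h = (curv1 h) dz ∧ dz̄`. -/
def curv1 {r : ℕ} (h : ℂ → Matrix (Fin r) (Fin r) ℂ) (z : ℂ) : Matrix (Fin r) (Fin r) ℂ :=
  - mwDbar1 (conn1 h) z

/-- The hermitian pairing `(u,v)_h = v^* h u`. -/
def hpair {r : ℕ} (h : Matrix (Fin r) (Fin r) ℂ) (u v : Fin r → ℂ) : ℂ :=
  dotProduct (star v) (h.mulVec u)

/-- The squared norm `‖u‖²_h`. -/
def hnorm {r : ℕ} (h : Matrix (Fin r) (Fin r) ℂ) (u : Fin r → ℂ) : ℝ :=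
  (hpair h u u).re

/-- Subharmonicity on a set `Ω ⊆ ℂ`: upper semicontinuity together with the sub-mean value
inequality over circles whose closed disc lies in the set. -/
def SubhOn (f : ℂ → ℝ) (Ω : Set ℂ) : Prop :=
  UpperSemicontinuousOn f Ω ∧
  ∀ z ∈ Ω, ∀ ρ : ℝ, 0 < ρ → Metric.closedBall z ρ ⊆ Ω →
    f z ≤ (1 / (2 * Real.pi)) * ∫ t in (0:ℝ)..(2 * Real.pi),
      f (z + (ρ : ℂ) * Complex.exp (t * Complex.I))

end

/-- The singular hermitian metric of Theorem 1.4: rows `(1+|z|², z)` and `(z̄, |z|²)`. -/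
noncomputable def hEx (z : ℂ) : Matrix (Fin 2) (Fin 2) ℂ :=
  !![((1 + ‖z‖^2 : ℝ) : ℂ), z; (starRingEnd ℂ) z, ((‖z‖^2 : ℝ) : ℂ)]

section Helpers

lemma cs_step (φ : ℝ → ℝ) (hφ : ContinuousOn φ (Set.uIcc 0 (2*Real.pi))) :
    (∫ t in (0:ℝ)..(2*Real.pi), φ t)^2 ≤ (2*Real.pi) * ∫ t in (0:ℝ)..(2*Real.pi), (φ t)^2 := by
  have int1 : IntervalIntegrable φ volume 0 (2*Real.pi) := hφ.intervalIntegrable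
  have int2 : IntervalIntegrable (fun t => (φ t)^2) volume 0 (2*Real.pi) :=
    (hφ.pow 2).intervalIntegrable
  set A := ∫ t in (0:ℝ)..(2*Real.pi), φ t with hA
  set B := ∫ t in (0:ℝ)..(2*Real.pi), (φ t)^2 with hB
  have hπ : (0:ℝ) < 2*Real.pi := by positivity
  have h0 : 0 ≤ ∫ t in (0:ℝ)..(2*Real.pi), ((2*Real.pi) * φ t - A)^2 :=
    intervalIntegral.integral_nonneg hπ.le (fun t _ => sq_nonneg _)
  have hexp : (∫ t in (0:ℝ)..(2*Real.pi), ((2*Real.pi) * φ t - A)^2)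
      = (2*Real.pi)^2 * B - 2*(2*Real.pi)*A*A + A^2*(2*Real.pi) := by
    have h1 : ∀ t, ((2*Real.pi) * φ t - A)^2
        = (2*Real.pi)^2 * (φ t)^2 - (2*(2*Real.pi)*A) * φ t + A^2 := by intro t; ring
    simp_rw [h1]
    rw [intervalIntegral.integral_add ((int2.const_mul _).sub (int1.const_mul _))
      intervalIntegrable_const,
      intervalIntegral.integral_sub (int2.const_mul _) (int1.const_mul _),
      intervalIntegral.integral_const_mul, intervalIntegral.integral_const_mul,
      intervalIntegral.integral_const, ← hA, ← hB, smul_eq_mul]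
    ring
  rw [hexp] at h0
  nlinarith [h0, hπ]

lemma mean_value (g : ℂ → ℂ) {c : ℂ} {ρ : ℝ} (hρ : 0 < ρ)
    (hg : DiffContOnCl ℂ g (ball c ρ)) :
    (∫ t in (0:ℝ)..(2*Real.pi), g (circleMap c ρ t)) = (2*Real.pi : ℂ) * g c := by
  have hc : c ∈ ball c ρ := mem_ball_self hρ
  have key := hg.circleIntegral_sub_inv_smul hc
  rw [circleIntegral] at key
  simp only [deriv_circleMap, smul_eq_mul] at key
  have heq : ∀ t : ℝ, circleMap 0 ρ t * I * ((circleMap c ρ t - c)⁻¹ * g (circleMap c ρ t))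
      = I * g (circleMap c ρ t) := by
    intro t
    rw [circleMap_sub_center]
    have hne : circleMap 0 ρ t ≠ 0 := circleMap_ne_center hρ.ne'
    field_simp
  simp_rw [heq] at key
  rw [intervalIntegral.integral_const_mul] at key
  exact mul_left_cancel₀ I_ne_zero (by rw [key]; ring)

lemma sq_mean (g : ℂ → ℂ) {c : ℂ} {ρ : ℝ} (hρ : 0 < ρ)
    (hg : DiffContOnCl ℂ g (ball c ρ)) :
    ‖g c‖^2 ≤ (1/(2*Real.pi)) * ∫ t in (0:ℝ)..(2*Real.pi), ‖g (circleMap c ρ t)‖^2 := by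
  have hπ : (0:ℝ) < 2*Real.pi := by positivity
  have hcont : ContinuousOn (fun t : ℝ => g (circleMap c ρ t)) (Set.uIcc 0 (2*Real.pi)) := by
    have h1 : ContinuousOn g (closedBall c ρ) := by
      rw [← closure_ball c hρ.ne']; exact hg.continuousOn
    exact h1.comp (continuous_circleMap c ρ).continuousOn
      (fun t _ => sphere_subset_closedBall (circleMap_mem_sphere c hρ.le t))
  have hnorm : ContinuousOn (fun t : ℝ => ‖g (circleMap c ρ t)‖) (Set.uIcc 0 (2*Real.pi)) :=
    hcont.norm
  have h1 : 2*Real.pi * ‖g c‖ ≤ ∫ t in (0:ℝ)..(2*Real.pi), ‖g (circleMap c ρ t)‖ := by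
    have := mean_value g hρ hg
    have hn : ‖∫ t in (0:ℝ)..(2*Real.pi), g (circleMap c ρ t)‖ = 2*Real.pi * ‖g c‖ := by
      rw [this, norm_mul]
      simp [Complex.norm_real, abs_of_pos hπ, Real.pi_pos.le]
    rw [← hn]
    exact intervalIntegral.norm_integral_le_integral_norm hπ.le
  have hcs := cs_step (fun t => ‖g (circleMap c ρ t)‖) hnorm
  have hA : 0 ≤ ∫ t in (0:ℝ)..(2*Real.pi), ‖g (circleMap c ρ t)‖ :=
    intervalIntegral.integral_nonneg hπ.le (fun t _ => norm_nonneg _)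
  have h2 : (2*Real.pi) * ‖g c‖^2 ≤ ∫ t in (0:ℝ)..(2*Real.pi), ‖g (circleMap c ρ t)‖^2 := by
    nlinarith [h1, hcs, hA, hπ, norm_nonneg (g c), mul_le_mul h1 h1 (by positivity) hA]
  calc ‖g c‖^2 = (1/(2*Real.pi)) * ((2*Real.pi) * ‖g c‖^2) := by field_simp
    _ ≤ _ := mul_le_mul_of_nonneg_left h2 (by positivity)

end Helpers

/-- For the metric `hEx` on the trivial rank-2 bundle over the unit disc,
`‖u‖²_h = |z u₁|² + |u₁ + z u₂|²` for every holomorphic section `u = (u₁,u₂)`; consequently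
`‖u‖²_h` is subharmonic for every holomorphic section, i.e. `hEx` is negatively curved in
the sense of Griffiths. -/


theorem statement_3 (u : ℂ → Fin 2 → ℂ)
    (hu : DifferentiableOn ℂ u (Metric.ball (0:ℂ) 1)) :
    (∀ z ∈ Metric.ball (0:ℂ) 1,
      hnorm (hEx z) (u z) = ‖z * u z 0‖^2 + ‖u z 0 + z * u z 1‖^2) ∧
    SubhOn (fun z => hnorm (hEx z) (u z)) (Metric.ball (0:ℂ) 1) := by
  have hid : ∀ z : ℂ, hnorm (hEx z) (u z) = ‖z * u z 0‖^2 + ‖u z 0 + z * u z 1‖^2 := by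
    intro z
    set a := u z 0
    set b := u z 1
    show (hpair (hEx z) (u z) (u z)).re = _
    simp only [hpair, hEx, dotProduct, Matrix.mulVec, Pi.star_apply,
      Fin.sum_univ_two, Matrix.cons_val', Matrix.cons_val_zero, Matrix.cons_val_one,
      Matrix.head_cons, Matrix.empty_val', Matrix.cons_val_fin_one, Matrix.head_fin_const,
      RCLike.star_def]
    show (starRingEnd ℂ a * (((1 + ‖z‖^2 : ℝ):ℂ) * a + z * b) +
      starRingEnd ℂ b * (starRingEnd ℂ z * a + ((‖z‖^2:ℝ):ℂ) * b)).re
      = ‖z * a‖^2 + ‖a + z * b‖^2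
    simp only [Complex.sq_norm, sq_abs, normSq_apply, Complex.add_re, Complex.add_im,
      Complex.mul_re, Complex.mul_im, Complex.ofReal_re, Complex.ofReal_im,
      Complex.conj_re, Complex.conj_im]
    ring
  refine ⟨fun z _ => hid z, ?_, ?_⟩
  · -- upper semicontinuity
    have hc0 : ContinuousOn (fun z => u z 0) (Metric.ball (0:ℂ) 1) :=
      (continuous_apply (0 : Fin 2)).comp_continuousOn hu.continuousOn
    have hc1 : ContinuousOn (fun z => u z 1) (Metric.ball (0:ℂ) 1) :=
      (continuous_apply (1 : Fin 2)).comp_continuousOn hu.continuousOn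
    have hf : ContinuousOn (fun z => hnorm (hEx z) (u z)) (Metric.ball (0:ℂ) 1) := by
      have : ContinuousOn (fun z : ℂ => ‖z * u z 0‖^2 + ‖u z 0 + z * u z 1‖^2)
          (Metric.ball (0:ℂ) 1) :=
        (((continuousOn_id.mul hc0).norm.pow 2).add
          (((hc0.add (continuousOn_id.mul hc1))).norm.pow 2))
      exact this.congr (fun z _ => hid z)
    exact hf.upperSemicontinuousOn
  · -- sub-mean value inequality
    intro c hc ρ hρ hsub
    set g₁ : ℂ → ℂ := fun z => z * u z 0 with hg₁def
    set g₂ : ℂ → ℂ := fun z => u z 0 + z * u z 1 with hg₂def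
    have hu0 : DifferentiableOn ℂ (fun z => u z 0) (Metric.ball (0:ℂ) 1) := fun z hz =>
      ((ContinuousLinearMap.proj (0 : Fin 2) :
        (Fin 2 → ℂ) →L[ℂ] ℂ).differentiableAt).comp_differentiableWithinAt z (hu z hz)
    have hu1 : DifferentiableOn ℂ (fun z => u z 1) (Metric.ball (0:ℂ) 1) := fun z hz =>
      ((ContinuousLinearMap.proj (1 : Fin 2) :
        (Fin 2 → ℂ) →L[ℂ] ℂ).differentiableAt).comp_differentiableWithinAt z (hu z hz)
    have hd1 : DifferentiableOn ℂ g₁ (Metric.ball (0:ℂ) 1) := differentiableOn_id.mul hu0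
    have hd2 : DifferentiableOn ℂ g₂ (Metric.ball (0:ℂ) 1) :=
      hu0.add (differentiableOn_id.mul hu1)
    have hcl : closure (ball c ρ) ⊆ Metric.ball (0:ℂ) 1 := by
      rw [closure_ball c hρ.ne']; exact hsub
    have hdc1 : DiffContOnCl ℂ g₁ (ball c ρ) :=
      ⟨hd1.mono ((ball_subset_closedBall.trans hsub)), (hd1.continuousOn).mono hcl⟩
    have hdc2 : DiffContOnCl ℂ g₂ (ball c ρ) :=
      ⟨hd2.mono ((ball_subset_closedBall.trans hsub)), (hd2.continuousOn).mono hcl⟩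
    have hm1 := sq_mean g₁ hρ hdc1
    have hm2 := sq_mean g₂ hρ hdc2
    -- continuity on the circle, for integrability
    have hπ : (0:ℝ) < 2*Real.pi := by positivity
    have hcont : ∀ g : ℂ → ℂ, DiffContOnCl ℂ g (ball c ρ) →
        ContinuousOn (fun t : ℝ => ‖g (circleMap c ρ t)‖^2) (Set.uIcc 0 (2*Real.pi)) := by
      intro g hg
      have h1 : ContinuousOn g (closedBall c ρ) := by
        rw [← closure_ball c hρ.ne']; exact hg.continuousOn
      exact ((h1.comp (continuous_circleMap c ρ).continuousOn
        (fun t _ => sphere_subset_closedBall (circleMap_mem_sphere c hρ.le t))).norm.pow 2)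
    have hint1 : IntervalIntegrable (fun t : ℝ => ‖g₁ (circleMap c ρ t)‖^2)
        volume 0 (2*Real.pi) := (hcont g₁ hdc1).intervalIntegrable
    have hint2 : IntervalIntegrable (fun t : ℝ => ‖g₂ (circleMap c ρ t)‖^2)
        volume 0 (2*Real.pi) := (hcont g₂ hdc2).intervalIntegrable
    have hsum : (∫ t in (0:ℝ)..(2*Real.pi),
          hnorm (hEx (c + (ρ:ℂ) * Complex.exp (t * Complex.I)))
            (u (c + (ρ:ℂ) * Complex.exp (t * Complex.I))))
        = (∫ t in (0:ℝ)..(2*Real.pi), ‖g₁ (circleMap c ρ t)‖^2)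
          + ∫ t in (0:ℝ)..(2*Real.pi), ‖g₂ (circleMap c ρ t)‖^2 := by
      rw [← intervalIntegral.integral_add hint1 hint2]
      apply intervalIntegral.integral_congr
      intro t _
      show hnorm (hEx (circleMap c ρ t)) (u (circleMap c ρ t)) = _
      exact hid _
    calc hnorm (hEx c) (u c) = ‖g₁ c‖^2 + ‖g₂ c‖^2 := hid c
      _ ≤ (1/(2*Real.pi)) * ((∫ t in (0:ℝ)..(2*Real.pi), ‖g₁ (circleMap c ρ t)‖^2)
            + ∫ t in (0:ℝ)..(2*Real.pi), ‖g₂ (circleMap c ρ t)‖^2) := by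
          rw [mul_add]; exact add_le_add hm1 hm2
      _ = _ := by rw [hsum]
end

section
/- Let Δ ⊂ ℂ be the unit disc and let h be the hermitian matrix-valued function on Δ with rows (1+|z|², z) and (z̄, |z|²). Then for z ≠ 0 the connection matrix θ^h := h⁻¹∂h equals the matrix with rows (1/z, 0) and (−1/z², 1/z) times dz; in particular the entry −1/z² is not locally integrable on Δ, so θ^h does not have locally integrable coefficients and Θ^h := ∂̄θ^h is not a current with measure coefficients. -/
open MeasureTheory Complex Metric
open scoped ComplexOrder

section Aux

open MeasureTheory Complex Metric

private lemma hasFDerivAt_mulconj (z : ℂ) : HasFDerivAt (fun w : ℂ => w * (starRingEnd ℂ) w)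
    (z • (Complex.conjCLE : ℂ →L[ℝ] ℂ) + (ContinuousLinearMap.id ℝ ℂ).smulRight
      ((starRingEnd ℂ) z)) z := by
  refine ((hasFDerivAt_id z).mul' (Complex.conjCLE.hasFDerivAt (x := z))).congr_fderiv ?_
  ext v <;> simp [mul_comm]

private lemma wD1_id' (z : ℂ) : wD1 (fun w => w) z = 1 := by
  simp [wD1, fderiv_id']; ring

private lemma wD1_conj' (z : ℂ) : wD1 (fun w => (starRingEnd ℂ) w) z = 0 := by
  have hd : HasFDerivAt (fun w : ℂ => (starRingEnd ℂ) w)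
      Complex.conjCLE.toContinuousLinearMap z := by
    exact Complex.conjCLE.hasFDerivAt (x := z)
  rw [wD1, hd.fderiv]
  simp

private lemma normSq_eq_mul_conj' (w : ℂ) : ((‖w‖^2 : ℝ) : ℂ) = w * (starRingEnd ℂ) w := by
  rw [Complex.mul_conj]
  norm_cast
  simp [Complex.sq_norm]

private lemma wD1_normSq' (z : ℂ) : wD1 (fun w => ((‖w‖^2 : ℝ) : ℂ)) z = (starRingEnd ℂ) z := by
  have h : (fun w : ℂ => ((‖w‖^2 : ℝ) : ℂ)) = fun w => w * (starRingEnd ℂ) w := by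
    funext w; exact normSq_eq_mul_conj' w
  rw [wD1, h, (hasFDerivAt_mulconj z).fderiv]
  simp [Complex.ext_iff]
  constructor <;> ring

private lemma wD1_one_add_normSq' (z : ℂ) :
    wD1 (fun w => ((1 + ‖w‖^2 : ℝ) : ℂ)) z = (starRingEnd ℂ) z := by
  have h : (fun w : ℂ => ((1 + ‖w‖^2 : ℝ) : ℂ)) = fun w => 1 + w * (starRingEnd ℂ) w := by
    funext w; rw [Complex.ofReal_add, Complex.ofReal_one, normSq_eq_mul_conj']
  have hd : HasFDerivAt (fun w : ℂ => 1 + w * (starRingEnd ℂ) w)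
      (z • (Complex.conjCLE : ℂ →L[ℝ] ℂ) + (ContinuousLinearMap.id ℝ ℂ).smulRight
        ((starRingEnd ℂ) z)) z := by
    exact ((hasFDerivAt_const (1:ℂ) z).add (hasFDerivAt_mulconj z)).congr_fderiv (by simp)
  rw [wD1, h, hd.fderiv]
  simp [Complex.ext_iff]
  constructor <;> ring

private lemma mwD1_hEx (z : ℂ) :
    mwD1 hEx z = !![(starRingEnd ℂ) z, 1; 0, (starRingEnd ℂ) z] := by
  ext a b
  fin_cases a <;> fin_cases b
  · simpa [mwD1, hEx] using wD1_one_add_normSq' z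
  · simpa [mwD1, hEx] using wD1_id' z
  · simpa [mwD1, hEx] using wD1_conj' z
  · simpa [mwD1, hEx] using wD1_normSq' z

private lemma conn1_hEx {z : ℂ} (hz : z ≠ 0) :
    conn1 hEx z = !![1/z, 0; -(1/z^2), 1/z] := by
  have hzc : (starRingEnd ℂ) z ≠ 0 := by simpa using hz
  have hdet : IsUnit (hEx z).det := by
    rw [isUnit_iff_ne_zero]
    have : (hEx z).det = (z * (starRingEnd ℂ) z)^2 := by
      rw [hEx, Matrix.det_fin_two_of, Complex.ofReal_add, Complex.ofReal_one,
        normSq_eq_mul_conj']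
      ring
    rw [this]
    exact pow_ne_zero _ (mul_ne_zero hz hzc)
  have := (hEx z).invertibleOfIsUnitDet hdet
  have key : hEx z * !![1/z, 0; -(1/z^2), 1/z] = mwD1 hEx z := by
    rw [mwD1_hEx, hEx, Matrix.mul_fin_two]
    rw [Complex.ofReal_add, Complex.ofReal_one, normSq_eq_mul_conj']
    ext i j
    fin_cases i <;> fin_cases j <;>
      simp only [Matrix.cons_val', Matrix.cons_val_zero, Matrix.cons_val_one, Matrix.head_cons,
        Matrix.head_fin_const, Matrix.empty_val', Matrix.cons_val_fin_one, Matrix.of_apply, Fin.zero_eta, Fin.mk_one] <;>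
      field_simp <;> ring
  rw [conn1, ← key, Matrix.inv_mul_cancel_left_of_invertible]

private lemma not_integrableOn_inv_sq {ε : ℝ} (hε : 0 < ε) :
    ¬ IntegrableOn (fun z : ℂ => 1/z^2) (Metric.ball (0:ℂ) ε) := by
  intro h
  set r : ℕ → ℝ := fun k => ε * (1/2)^k with hr
  have hrpos : ∀ k, 0 < r k := fun k => by positivity
  have hrsucc : ∀ k, r (k+1) = r k / 2 := fun k => by
    simp [hr, pow_succ]; ring
  set A : ℕ → Set ℂ := fun k => Metric.ball 0 (r k) \ Metric.ball 0 (r (k+1)) with hA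
  have hAmeas : ∀ k, MeasurableSet (A k) :=
    fun k => measurableSet_ball.diff measurableSet_ball
  have hAsub : ∀ k, A k ⊆ Metric.ball 0 ε := by
    intro k
    refine Set.diff_subset.trans (Metric.ball_subset_ball ?_)
    calc r k = ε * (1/2)^k := rfl
      _ ≤ ε * 1 := by
          gcongr
          exact pow_le_one₀ (by norm_num) (by norm_num)
      _ = ε := mul_one ε
  have hrmono : ∀ {m n : ℕ}, m ≤ n → r n ≤ r m := by
    intro m n hmn
    exact mul_le_mul_of_nonneg_left (pow_le_pow_of_le_one (by norm_num) (by norm_num) hmn) hε.le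
  have hAdisj : Pairwise (Function.onFun Disjoint A) := by
    refine (pairwise_disjoint_on A).mpr fun m n hmn => ?_
    refine Set.disjoint_of_subset_right ?_ (Set.disjoint_sdiff_left)
    exact Set.diff_subset.trans (Metric.ball_subset_ball (hrmono hmn))
  have hvol : ∀ k, volume (A k) = ENNReal.ofReal ((3/4) * (r k)^2) * NNReal.pi := by
    intro k
    rw [hA]
    rw [measure_diff (Metric.ball_subset_ball (hrmono (Nat.le_succ k)))
      measurableSet_ball.nullMeasurableSet measure_ball_lt_top.ne]
    rw [Complex.volume_ball, Complex.volume_ball, hrsucc,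
      ← ENNReal.ofReal_pow (hrpos k).le, ← ENNReal.ofReal_pow (by positivity : (0:ℝ) ≤ r k / 2),
      ← ENNReal.sub_mul (fun _ _ => ENNReal.coe_ne_top),
      ← ENNReal.ofReal_sub _ (by positivity)]
    congr 2
    ring
  have hmeas : Measurable fun z : ℂ => (‖(1:ℂ)/z^2‖₊ : ENNReal) :=
    (measurable_const.div (measurable_id.pow_const 2)).nnnorm.coe_nnreal_ennreal
  have hptwise : ∀ k, ∀ z ∈ A k,
      (ENNReal.ofReal ((r k)^2))⁻¹ ≤ (‖(1:ℂ)/z^2‖₊ : ENNReal) := by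
    intro k z hz
    have hz1 : ‖z‖ < r k := by simpa using hz.1
    have hz2 : r (k+1) ≤ ‖z‖ := by
      by_contra hcon
      exact hz.2 (by simpa using lt_of_not_ge hcon)
    have hzne : z ≠ 0 := by
      intro h0
      rw [h0] at hz2
      simpa using lt_of_lt_of_le (hrpos (k+1)) hz2
    have heq : (‖(1:ℂ)/z^2‖₊ : ENNReal) = (ENNReal.ofReal (‖z‖^2))⁻¹ := by
      rw [one_div, nnnorm_inv, nnnorm_pow, ENNReal.coe_inv (by simpa using hzne),
        ENNReal.coe_pow, ← enorm_eq_nnnorm, ← ofReal_norm_eq_enorm, ← ENNReal.ofReal_pow (norm_nonneg z)]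
    rw [heq]
    refine ENNReal.inv_le_inv.mpr ?_
    exact ENNReal.ofReal_le_ofReal (by nlinarith [norm_nonneg z])
  have hannulus : ∀ k, ENNReal.ofReal (3/4) * NNReal.pi ≤ ∫⁻ z in A k, ‖(1:ℂ)/z^2‖₊ := by
    intro k
    have h1 : ∫⁻ z in A k, (ENNReal.ofReal ((r k)^2))⁻¹ ≤ ∫⁻ z in A k, ‖(1:ℂ)/z^2‖₊ :=
      setLIntegral_mono hmeas (hptwise k)
    rw [setLIntegral_const, hvol] at h1
    refine le_trans (le_of_eq ?_) h1
    have h0 : ENNReal.ofReal ((r k)^2) ≠ 0 := (ENNReal.ofReal_pos.mpr (by positivity)).ne'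
    rw [ENNReal.ofReal_mul (by norm_num : (0:ℝ) ≤ 3/4)]
    calc ENNReal.ofReal (3/4) * NNReal.pi
        = ((ENNReal.ofReal ((r k)^2))⁻¹ * ENNReal.ofReal ((r k)^2)) *
            (ENNReal.ofReal (3/4) * NNReal.pi) := by
          rw [ENNReal.inv_mul_cancel h0 ENNReal.ofReal_ne_top, one_mul]
      _ = (ENNReal.ofReal ((r k)^2))⁻¹ *
            (ENNReal.ofReal (3/4) * ENNReal.ofReal ((r k)^2) * NNReal.pi) := by ring
  have hc : (ENNReal.ofReal (3/4) * NNReal.pi : ENNReal) ≠ 0 := by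
    refine mul_ne_zero ((ENNReal.ofReal_pos.mpr (by norm_num)).ne') ?_
    exact ENNReal.coe_ne_zero.mpr NNReal.pi_ne_zero
  have hfin : (∫⁻ z in Metric.ball (0:ℂ) ε, ‖(1:ℂ)/z^2‖₊) < ⊤ := h.2
  have htop : (⊤ : ENNReal) ≤ ∫⁻ z in Metric.ball (0:ℂ) ε, ‖(1:ℂ)/z^2‖₊ := by
    calc (⊤ : ENNReal) = ∑' _ : ℕ, (ENNReal.ofReal (3/4) * NNReal.pi : ENNReal) :=
          (ENNReal.tsum_const_eq_top_of_ne_zero hc).symm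
      _ ≤ ∑' k, ∫⁻ z in A k, ‖(1:ℂ)/z^2‖₊ := ENNReal.tsum_le_tsum hannulus
      _ = ∫⁻ z in ⋃ k, A k, ‖(1:ℂ)/z^2‖₊ := (lintegral_iUnion hAmeas hAdisj _).symm
      _ ≤ ∫⁻ z in Metric.ball (0:ℂ) ε, ‖(1:ℂ)/z^2‖₊ :=
          lintegral_mono_set (Set.iUnion_subset hAsub)
  exact (lt_irrefl _ (lt_of_le_of_lt htop hfin)).elim

end Aux

/-- For the metric `hEx`, away from the origin the connection matrix
`θ^h = h⁻¹∂h` equals `!![1/z, 0; -1/z², 1/z]` (times `dz`); in particular its entry `-1/z²`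
is not locally integrable on the unit disc, so `θ^h` does not have locally integrable
coefficients (and hence `Θ^h = ∂̄θ^h` cannot be defined as a current with measure
coefficients by pairing `θ^h` against derivatives of test functions). -/
theorem statement_4 :
    (∀ z : ℂ, z ≠ 0 → conn1 hEx z = !![1/z, 0; -(1/z^2), 1/z]) ∧
    ¬ LocallyIntegrableOn (fun z => conn1 hEx z 1 0) (Metric.ball (0:ℂ) 1) := by
  have part1 : ∀ z : ℂ, z ≠ 0 → conn1 hEx z = !![1/z, 0; -(1/z^2), 1/z] :=
    fun z hz => conn1_hEx hz
  refine ⟨part1, ?_⟩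
  intro hL
  have h0 : (0:ℂ) ∈ Metric.ball (0:ℂ) 1 := by simp
  have hInt := hL 0 h0
  rw [nhdsWithin_eq_nhds.mpr (Metric.isOpen_ball.mem_nhds h0)] at hInt
  obtain ⟨s, hs, hsi⟩ := hInt
  obtain ⟨ε, hε, hball⟩ := Metric.mem_nhds_iff.mp hs
  have hIball : IntegrableOn (fun z => conn1 hEx z 1 0) (Metric.ball (0:ℂ) ε) :=
    hsi.mono_set hball
  have hae : (fun z => conn1 hEx z 1 0)
      =ᵐ[MeasureTheory.volume.restrict (Metric.ball (0:ℂ) ε)] (fun z : ℂ => -(1/z^2)) := by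
    have h1 : ∀ᵐ z : ℂ, z ≠ 0 := by
      rw [MeasureTheory.ae_iff]
      simpa using MeasureTheory.measure_singleton (0:ℂ)
    refine MeasureTheory.ae_restrict_of_ae (h1.mono fun z hz => ?_)
    show conn1 hEx z 1 0 = -(1/z^2)
    rw [part1 z hz]
    simp
  have hIneg : IntegrableOn (fun z : ℂ => -(1/z^2)) (Metric.ball (0:ℂ) ε) :=
    (MeasureTheory.Integrable.congr hIball hae)
  have hfinal : IntegrableOn (fun z : ℂ => 1/z^2) (Metric.ball (0:ℂ) ε) := by
    refine (hIneg.neg).congr (Filter.Eventually.of_forall fun z => ?_)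
    simp
  exact not_integrableOn_inv_sq hε hfinal
end
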